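/- Let s be a supply vector, d a demand vector, and α a target supply vector such that for every i ∈ V, α_i > 0 implies d_i > 0. Then there exist surge prices r̄ : V → ℝ with r̄_v ≥ 0 for all v, and a min cost flow f from s to α, such that for every u, v with f(u,v) > 0, μ(u→v | α, r̄, d) = max_{w∈V} μ(u→w | α, r̄, d). That is, there exist surge prices for which some passenger-taxicab equilibrium induces the target supply α. -/

import Mathlib

/-- A flow from supply `s` to supply `s'`. -/
def IsFlow {V : Type*} [Fintype V] (f : V → V → ℝ) (s s' : V → ℝ) : Prop :=
  (∀ u v, 0 ≤ f u v) ∧ (∀ u, ∑ v, f u v = s u) ∧ (∀ v, ∑ u, f u v = s' v)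

/-- The cost of a flow. -/
def flowCost {V : Type*} [Fintype V] (ℓ f : V → V → ℝ) : ℝ :=
  ∑ u, ∑ v, f u v * ℓ u v

/-- `f` is a minimum cost flow from `s` to `s'`. -/
def IsMinCostFlow {V : Type*} [Fintype V] (ℓ f : V → V → ℝ) (s s' : V → ℝ) : Prop :=
  IsFlow f s s' ∧ ∀ g, IsFlow g s s' → flowCost ℓ f ≤ flowCost ℓ g

/-- The utility `μ(u → v | s', r, d)` of a taxicab moving from `u` to `v` given new supply
`s'`, surge prices `r` and demand `d`.  (Division by zero is zero in Lean, matching the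
convention `0/0 = 0`.) -/
noncomputable def util {V : Type*} (ℓ : V → V → ℝ) (s' r d : V → ℝ) (u v : V) : ℝ :=
  r v * min 1 (d v / s' v) - ℓ u v

section CM
variable {V : Type*} [Fintype V] [DecidableEq V]

private lemma ind_row (c e x : V) :
    ∑ y : V, (if c = x ∧ e = y then (1:ℝ) else 0) = if c = x then 1 else 0 := by
  by_cases hc : c = x
  · simp [hc, Finset.sum_ite_eq]
  · simp [hc]

private lemma ind_col (c e y : V) :
    ∑ x : V, (if c = x ∧ e = y then (1:ℝ) else 0) = if e = y then 1 else 0 := by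
  by_cases he : e = y
  · simp [he, Finset.sum_ite_eq]
  · simp [he]

private lemma ind_cost (ℓ : V → V → ℝ) (c e : V) :
    ∑ x : V, ∑ y : V, (if c = x ∧ e = y then (1:ℝ) else 0) * ℓ x y = ℓ c e := by
  have h1 : ∀ x, ∑ y : V, (if c = x ∧ e = y then (1:ℝ) else 0) * ℓ x y
      = if c = x then ℓ x e else 0 := by
    intro x
    by_cases hc : c = x
    · simp only [hc, true_and, if_true, ite_mul, one_mul, zero_mul]
      simp [Finset.sum_ite_eq]
    · simp [hc]
  simp only [h1]
  simp [Finset.sum_ite_eq]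

lemma cyclic_mono (ℓ f : V → V → ℝ) (s α : V → ℝ)
    (hmin : IsMinCostFlow ℓ f s α) (n : ℕ) (u v : Fin (n + 1) → V)
    (hf : ∀ i, 0 < f (u i) (v i)) :
    0 ≤ ∑ i : Fin (n + 1), (ℓ (u (i + 1)) (v i) - ℓ (u i) (v i)) := by
  set m : ℝ := Finset.univ.inf' Finset.univ_nonempty (fun i : Fin (n+1) => f (u i) (v i))
    with hmdef
  have hm : 0 < m := by
    rw [hmdef, Finset.lt_inf'_iff]
    exact fun i _ => hf i
  set ε : ℝ := m / ((n+1 : ℕ) : ℝ) with hεdef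
  have hk0 : (0:ℝ) < (n+1:ℕ) := by positivity
  have hε : 0 < ε := div_pos hm hk0
  set g : V → V → ℝ := fun x y => f x y + ε * ∑ i : Fin (n+1),
      ((if u (i+1) = x ∧ v i = y then (1:ℝ) else 0) - (if u i = x ∧ v i = y then 1 else 0))
    with hgdef
  have hshift : ∀ (F : V → ℝ),
      ∑ i : Fin (n+1), F (u (i+1)) = ∑ i : Fin (n+1), F (u i) :=
    fun F => Fintype.sum_equiv (Equiv.addRight 1) _ _ (fun i => rfl)
  have hgflow : IsFlow g s α := by
    refine ⟨?_, ?_, ?_⟩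
    · intro x y
      rw [hgdef]
      simp only [Finset.sum_sub_distrib]
      set P : ℝ := ∑ i : Fin (n+1), (if u (i+1) = x ∧ v i = y then (1:ℝ) else 0) with hP
      set M : ℝ := ∑ i : Fin (n+1), (if u i = x ∧ v i = y then (1:ℝ) else 0) with hM
      have hP0 : 0 ≤ P := Finset.sum_nonneg (fun i _ => by positivity)
      have hMk : M ≤ (n+1:ℕ) := by
        rw [hM]
        calc ∑ i : Fin (n+1), (if u i = x ∧ v i = y then (1:ℝ) else 0)
            ≤ ∑ _i : Fin (n+1), (1:ℝ) := Finset.sum_le_sum (fun i _ => by split <;> norm_num)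
          _ = ((n+1:ℕ):ℝ) := by simp
      by_cases hex : ∃ i, u i = x ∧ v i = y
      · obtain ⟨i, hi1, hi2⟩ := hex
        have hfxy : m ≤ f x y := by
          rw [← hi1, ← hi2]
          exact Finset.inf'_le _ (Finset.mem_univ i)
        have hεM : ε * M ≤ m := by
          calc ε * M ≤ ε * (n+1:ℕ) := by nlinarith
            _ = m := by rw [hεdef]; field_simp
        nlinarith
      · have hM0 : M = 0 := by
          rw [hM]
          refine Finset.sum_eq_zero (fun i _ => ?_)
          rw [if_neg (fun h => hex ⟨i, h⟩)]
        rw [hM0]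
        have := hf 0
        nlinarith [(hmin.1.1 x y)]
    · intro x
      rw [hgdef]
      simp only [Finset.sum_add_distrib, ← Finset.mul_sum, hmin.1.2.1 x]
      rw [Finset.sum_comm]
      simp only [Finset.sum_sub_distrib, ind_row]
      rw [hshift (fun z => if z = x then (1:ℝ) else 0)]
      · simp
      -- note: ind_row gives `if u (i+1) = x`; adjust below if mismatch
    · intro y
      rw [hgdef]
      simp only [Finset.sum_add_distrib, ← Finset.mul_sum, hmin.1.2.2 y]
      rw [Finset.sum_comm]
      simp only [Finset.sum_sub_distrib, ind_col]
      simp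
  have hcost : flowCost ℓ g = flowCost ℓ f
      + ε * ∑ i : Fin (n+1), (ℓ (u (i+1)) (v i) - ℓ (u i) (v i)) := by
    unfold flowCost
    rw [hgdef]
    simp only [add_mul, Finset.sum_add_distrib]
    congr 1
    simp only [mul_assoc, Finset.sum_mul, ← Finset.mul_sum]
    congr 1
    have hsw : ∀ x : V, (∑ y : V, ∑ i : Fin (n+1),
        ((if u (i + 1) = x ∧ v i = y then (1:ℝ) else 0) - if u i = x ∧ v i = y then 1 else 0)
          * ℓ x y)
        = ∑ i : Fin (n+1), ∑ y : V,
        ((if u (i + 1) = x ∧ v i = y then (1:ℝ) else 0) - if u i = x ∧ v i = y then 1 else 0)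
          * ℓ x y := fun x => Finset.sum_comm ..

    simp only [hsw]
    rw [Finset.sum_comm]
    refine Finset.sum_congr rfl (fun i _ => ?_)
    simp only [sub_mul, Finset.sum_sub_distrib, ind_cost]
  have h := hmin.2 g hgflow
  rw [hcost] at h
  nlinarith
end CM
lemma exists_potential {V : Type*} [Fintype V] [DecidableEq V] [Nonempty V]
    (ℓ f : V → V → ℝ) (s α : V → ℝ)
    (hmin : IsMinCostFlow ℓ f s α) :
    ∃ a b : V → ℝ, (∀ x, a x ≤ 0) ∧ (∀ x y, a x + b y ≤ ℓ x y) ∧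
      (∀ x y, 0 < f x y → a x + b y = ℓ x y) := by
  classical
  set S : V → Finset V := fun x => Finset.univ.filter (fun y => 0 < f x y) with hS
  set D : Finset V := Finset.univ.filter (fun x => (S x).Nonempty) with hD
  set w : V → V → ℝ := fun p q =>
    if h : (S p).Nonempty then (S p).inf' h (fun y => ℓ q y - ℓ p y) else 0 with hw
  have hmemS : ∀ p y, 0 < f p y → y ∈ S p := by
    intro p y hy; simp only [hS, Finset.mem_filter, Finset.mem_univ, true_and]; exact hy
  have hmemD : ∀ p y, 0 < f p y → p ∈ D := by
    intro p y hy
    simp only [hD, Finset.mem_filter, Finset.mem_univ, true_and]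
    exact ⟨y, hmemS p y hy⟩
  have hwle : ∀ p q y, 0 < f p y → w p q ≤ ℓ q y - ℓ p y := by
    intro p q y hy
    have hne : (S p).Nonempty := ⟨y, hmemS p y hy⟩
    rw [hw]
    simp only [dif_pos hne]
    exact Finset.inf'_le _ (hmemS p y hy)
  have hwex : ∀ p q, p ∈ D → ∃ y, 0 < f p y ∧ w p q = ℓ q y - ℓ p y := by
    intro p q hp
    have hne : (S p).Nonempty := by
      simpa only [hD, Finset.mem_filter, Finset.mem_univ, true_and] using hp
    obtain ⟨y, hyS, hval⟩ := Finset.exists_mem_eq_inf' hne (fun y => ℓ q y - ℓ p y)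
    refine ⟨y, ?_, ?_⟩
    · simpa only [hS, Finset.mem_filter, Finset.mem_univ, true_and] using hyS
    · rw [hw]; simp only [dif_pos hne]; exact hval
  choose ch hch1 hch2 using hwex
  -- cycle nonnegativity
  have hcyc : ∀ (i j : ℕ) (x : ℕ → V), i < j → (∀ t, i ≤ t → t < j → x t ∈ D) → x i = x j →
      0 ≤ ∑ t ∈ Finset.Ico i j, w (x t) (x (t + 1)) := by
    intro i j x hij hDx hxij
    obtain ⟨n, hn⟩ : ∃ n : ℕ, j - i = n + 1 := ⟨j - i - 1, by omega⟩
    have hmem : ∀ t : Fin (n+1), x (i + t.val) ∈ D := fun t => by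
      refine hDx _ (Nat.le_add_right _ _) ?_
      have := t.isLt; omega
    set uu : Fin (n+1) → V := fun t => x (i + t.val) with huu
    set vv : Fin (n+1) → V := fun t => ch (x (i + t.val)) (x (i + t.val + 1)) (hmem t) with hvv
    have hfv : ∀ t, 0 < f (uu t) (vv t) := fun t => hch1 _ _ (hmem t)
    have huu1 : ∀ t : Fin (n+1), uu (t + 1) = x (i + t.val + 1) := by
      intro t
      have hval : ((t + 1 : Fin (n+1)).val) = (t.val + 1) % (n + 1) := by
        rw [Fin.val_add, Fin.val_one']
        conv_rhs => rw [Nat.add_mod]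
        rw [Nat.mod_eq_of_lt t.isLt]
      rw [huu]
      simp only [hval]
      by_cases hc : t.val + 1 = n + 1
      · have h0 : (t.val + 1) % (n + 1) = 0 := by rw [hc, Nat.mod_self]
        rw [h0]
        have : i + (t.val + 1) = j := by omega
        rw [Nat.add_zero, hxij, ← this]
        ring_nf
      · have h0 : (t.val + 1) % (n + 1) = t.val + 1 := by
          apply Nat.mod_eq_of_lt; have := t.isLt; omega
        rw [h0, ← Nat.add_assoc]
    have key : ∀ t : Fin (n+1), ℓ (uu (t+1)) (vv t) - ℓ (uu t) (vv t)
        = w (x (i + t.val)) (x (i + t.val + 1)) := by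
      intro t
      rw [huu1 t, hch2 _ _ (hmem t)]
    calc (0:ℝ) ≤ ∑ t : Fin (n+1), (ℓ (uu (t+1)) (vv t) - ℓ (uu t) (vv t)) :=
          cyclic_mono ℓ f s α hmin n uu vv hfv
      _ = ∑ t : Fin (n+1), w (x (i + t.val)) (x (i + t.val + 1)) :=
          Finset.sum_congr rfl (fun t _ => key t)
      _ = ∑ t ∈ Finset.range (n+1), w (x (i + t)) (x (i + t + 1)) := by
          rw [Finset.sum_range]
      _ = ∑ t ∈ Finset.Ico i j, w (x t) (x (t + 1)) := by
          rw [Finset.sum_Ico_eq_sum_range]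
          have : j - i = n + 1 := hn
          rw [this]
  -- lower bound on walk weights
  set B : ℝ := Finset.univ.sup' Finset.univ_nonempty (fun p : V × V => |w p.1 p.2|) with hB
  have hBw : ∀ p q, -B ≤ w p q := by
    intro p q
    have h1 : |w p q| ≤ B :=
      Finset.le_sup' (f := fun p : V × V => |w p.1 p.2|) (Finset.mem_univ (p, q))
    have := neg_abs_le (w p q)
    linarith
  have hB0 : 0 ≤ B := by
    obtain ⟨p⟩ := (inferInstance : Nonempty V)
    have h1 : |w p p| ≤ B :=
      Finset.le_sup' (f := fun p : V × V => |w p.1 p.2|) (Finset.mem_univ (p, p))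
    have := abs_nonneg (w p p)
    linarith
  set n : ℕ := Fintype.card V with hn
  have hlow : ∀ m (x : ℕ → V), (∀ i, i < m → x i ∈ D) →
      -(n * B) ≤ ∑ t ∈ Finset.range m, w (x t) (x (t + 1)) := by
    intro m
    induction m using Nat.strong_induction_on with
    | _ m IH =>
      intro x hx
      by_cases hm : m ≤ n
      · have h1 : ∀ t ∈ Finset.range m, -B ≤ w (x t) (x (t+1)) := fun t _ => hBw _ _
        have h2 : (Finset.range m).card • (-B) ≤ ∑ t ∈ Finset.range m, w (x t) (x (t+1)) :=
          Finset.card_nsmul_le_sum _ _ _ h1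
        rw [Finset.card_range, nsmul_eq_mul] at h2
        have hmn : (m:ℝ) ≤ n := by exact_mod_cast hm
        nlinarith
      · push_neg at hm
        have hninj : ¬ Function.Injective (fun t : Fin (n+1) => x t.val) := by
          intro hinj
          have hcard := Fintype.card_le_of_injective _ hinj
          simp only [Fintype.card_fin] at hcard
          omega
        rw [Function.not_injective_iff] at hninj
        obtain ⟨t1, t2, heq, hne⟩ := hninj
        -- produce i < j ≤ n with x i = x j
        obtain ⟨i, j, hij, hjn, hxij⟩ : ∃ i j : ℕ, i < j ∧ j ≤ n ∧ x i = x j := by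
          rcases lt_or_gt_of_ne hne with h | h
          · exact ⟨t1.val, t2.val, h, by omega, heq⟩
          · exact ⟨t2.val, t1.val, h, by omega, heq.symm⟩
        set dd : ℕ := j - i with hdd
        set m' : ℕ := m - dd with hm'
        have hddpos : 0 < dd := by omega
        have hm'lt : m' < m := by omega
        have hjm : j < m := by omega
        have him' : i ≤ m' := by omega
        set x' : ℕ → V := fun t => if t < i then x t else x (t + dd) with hx'
        have hx'val : ∀ t, t < m' → x' t ∈ D := by
          intro t ht
          rw [hx']
          by_cases h : t < i
          · simp only [if_pos h]; exact hx t (by omega)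
          · simp only [if_neg h]; exact hx (t + dd) (by omega)
        have hterm : ∀ t, t < i → w (x' t) (x' (t+1)) = w (x t) (x (t+1)) := by
          intro t ht
          have h1 : x' t = x t := by rw [hx']; simp only [if_pos ht]
          have h2 : x' (t+1) = x (t+1) := by
            rw [hx']
            by_cases h : t + 1 < i
            · simp only [if_pos h]
            · have : t + 1 = i := by omega
              simp only [if_neg h, this]
              rw [show i + dd = j by omega, ← hxij]
              simp
          rw [h1, h2]
        have hterm2 : ∀ t, i ≤ t → w (x' t) (x' (t+1)) = w (x (t + dd)) (x (t + dd + 1)) := by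
          intro t ht
          have h1 : x' t = x (t + dd) := by rw [hx']; simp only [if_neg (by omega : ¬ t < i)]
          have h2 : x' (t+1) = x (t + dd + 1) := by
            rw [hx']
            simp only [if_neg (by omega : ¬ t + 1 < i)]
            ring_nf
          rw [h1, h2]
        have hsplit : ∑ t ∈ Finset.range m, w (x t) (x (t+1))
            = (∑ t ∈ Finset.range i, w (x t) (x (t+1)))
              + (∑ t ∈ Finset.Ico i j, w (x t) (x (t+1)))
              + (∑ t ∈ Finset.Ico j m, w (x t) (x (t+1))) := by
          rw [Finset.range_eq_Ico, ← Finset.sum_Ico_consecutive _ (by omega : 0 ≤ i) (by omega : i ≤ m),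
            ← Finset.sum_Ico_consecutive _ (by omega : i ≤ j) (by omega : j ≤ m)]
          rw [← Finset.range_eq_Ico]
          ring
        have hsplit' : ∑ t ∈ Finset.range m', w (x' t) (x' (t+1))
            = (∑ t ∈ Finset.range i, w (x t) (x (t+1)))
              + (∑ t ∈ Finset.Ico j m, w (x t) (x (t+1))) := by
          rw [Finset.range_eq_Ico,
            ← Finset.sum_Ico_consecutive _ (by omega : 0 ≤ i) (by omega : i ≤ m')]
          congr 1
          · rw [← Finset.range_eq_Ico]
            exact Finset.sum_congr rfl (fun t ht => hterm t (Finset.mem_range.mp ht))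
          · rw [Finset.sum_Ico_eq_sum_range, Finset.sum_Ico_eq_sum_range]
            have hlen : m' - i = m - j := by omega
            rw [hlen]
            refine Finset.sum_congr rfl (fun t _ => ?_)
            rw [hterm2 (i + t) (Nat.le_add_right _ _)]
            congr 2 <;> omega
        have hmid : 0 ≤ ∑ t ∈ Finset.Ico i j, w (x t) (x (t+1)) :=
          hcyc i j x hij (fun t ht1 ht2 => hx t (by omega)) hxij
        have hIH := IH m' hm'lt x' hx'val
        rw [hsplit'] at hIH
        rw [hsplit]
        linarith
  -- the potential a via infimum over walk weights
  set WalkTo : V → Set ℝ := fun q => {c | ∃ (m : ℕ) (x : ℕ → V), (∀ i, i < m → x i ∈ D) ∧ x m = q ∧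
      c = ∑ t ∈ Finset.range m, w (x t) (x (t + 1))} with hWalk
  have hWmem : ∀ q, (0:ℝ) ∈ WalkTo q := by
    intro q
    exact ⟨0, fun _ => q, fun i hi => absurd hi (by omega), rfl, by simp⟩
  have hWbdd : ∀ q, BddBelow (WalkTo q) := by
    intro q
    refine ⟨-(n*B), ?_⟩
    rintro c ⟨m, x, h1, h2, rfl⟩
    exact hlow m x h1
  set a : V → ℝ := fun q => sInf (WalkTo q) with ha
  have ha0 : ∀ q, a q ≤ 0 := fun q => csInf_le (hWbdd q) (hWmem q)
  have hrelax : ∀ p q, p ∈ D → a q ≤ a p + w p q := by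
    intro p q hp
    have hstep : ∀ c ∈ WalkTo p, a q - w p q ≤ c := by
      rintro c ⟨m, x, h1, h2, rfl⟩
      set x' : ℕ → V := fun t => if t ≤ m then x t else q with hx'
      have hmem' : (∑ t ∈ Finset.range (m+1), w (x' t) (x' (t+1))) ∈ WalkTo q := by
        refine ⟨m+1, x', ?_, ?_, rfl⟩
        · intro t ht
          rw [hx']
          simp only [if_pos (by omega : t ≤ m)]
          by_cases h : t < m
          · exact h1 t h
          · have : t = m := by omega
            rw [this, h2]; exact hp
        · rw [hx']; simp only [if_neg (by omega : ¬ m + 1 ≤ m)]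
      have hsum : ∑ t ∈ Finset.range (m+1), w (x' t) (x' (t+1))
          = (∑ t ∈ Finset.range m, w (x t) (x (t+1))) + w p q := by
        rw [Finset.sum_range_succ]
        congr 1
        · refine Finset.sum_congr rfl (fun t ht => ?_)
          have ht' := Finset.mem_range.mp ht
          rw [hx']
          simp only [if_pos (by omega : t ≤ m), if_pos (by omega : t + 1 ≤ m)]
        · rw [hx']
          simp only [if_pos (le_refl m), if_neg (by omega : ¬ m + 1 ≤ m), h2]
      have hle : a q ≤ (∑ t ∈ Finset.range m, w (x t) (x (t+1))) + w p q := by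
        rw [← hsum]
        exact csInf_le (hWbdd q) hmem'
      linarith
    have := le_csInf ⟨0, hWmem p⟩ hstep
    have hap : a q - w p q ≤ a p := this
    linarith
  -- define b
  set b : V → ℝ := fun y => Finset.univ.inf' Finset.univ_nonempty (fun x => ℓ x y - a x) with hb
  refine ⟨a, b, ha0, ?_, ?_⟩
  · intro x y
    have : b y ≤ ℓ x y - a x := Finset.inf'_le _ (Finset.mem_univ x)
    linarith
  · intro x y hxy
    have hxD : x ∈ D := hmemD x y hxy
    have hge : ∀ z, ℓ x y - a x ≤ ℓ z y - a z := by
      intro z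
      have h1 := hrelax x z hxD
      have h2 := hwle x z y hxy
      linarith
    have hbEq : b y = ℓ x y - a x := by
      refine le_antisymm (Finset.inf'_le _ (Finset.mem_univ x)) ?_
      exact Finset.le_inf' _ _ (fun z _ => hge z)
    rw [hbEq]
    ring

lemma exists_minflow {V : Type*} [Fintype V] [Nonempty V] (ℓ : V → V → ℝ) (s α : V → ℝ)
    (hs0 : ∀ v, 0 ≤ s v) (hs1 : ∑ v, s v = 1) (hα0 : ∀ v, 0 ≤ α v) (hα1 : ∑ v, α v = 1) :
    ∃ f, IsMinCostFlow ℓ f s α := by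
  set K : Set (V → V → ℝ) := {f | IsFlow f s α} with hK
  have hKne : K.Nonempty := by
    refine ⟨fun u v => s u * α v, ⟨fun u v => mul_nonneg (hs0 u) (hα0 v), fun u => by
      rw [← Finset.mul_sum, hα1, mul_one], fun v => by rw [← Finset.sum_mul, hs1, one_mul]⟩⟩
  have e : ∀ (u v : V), Continuous (fun f : V → V → ℝ => f u v) := fun u v =>
    (continuous_apply v).comp (continuous_apply u)
  have hKc : IsClosed K := by
    have hKeq : K = (⋂ u, ⋂ v, {f : V → V → ℝ | 0 ≤ f u v}) ∩
        ((⋂ u, {f : V → V → ℝ | ∑ v, f u v = s u}) ∩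
         (⋂ v, {f : V → V → ℝ | ∑ u, f u v = α v})) := by
      ext f
      simp [hK, IsFlow, Set.mem_iInter, forall_and]
    rw [hKeq]
    refine IsClosed.inter (isClosed_iInter fun u => isClosed_iInter fun v =>
      isClosed_le continuous_const (e u v)) (IsClosed.inter ?_ ?_)
    · exact isClosed_iInter fun u => isClosed_eq (continuous_finset_sum _ fun v _ => e u v)
        continuous_const
    · exact isClosed_iInter fun v => isClosed_eq (continuous_finset_sum _ fun u _ => e u v)
        continuous_const
  have hsub : K ⊆ Set.Icc (0 : V → V → ℝ) 1 := by
    intro f hf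
    obtain ⟨h1, h2, h3⟩ := hf
    constructor
    · intro u; intro v; exact h1 u v
    · intro u; intro v
      have hfv : f u v ≤ s u := by
        rw [← h2 u]
        exact Finset.single_le_sum (fun y _ => h1 u y) (Finset.mem_univ v)
      have hsu : s u ≤ 1 := by
        rw [← hs1]
        exact Finset.single_le_sum (fun y _ => hs0 y) (Finset.mem_univ u)
      calc f u v ≤ s u := hfv
        _ ≤ 1 := hsu
  have hKcomp : IsCompact K := IsCompact.of_isClosed_subset isCompact_Icc hKc hsub
  have hcont : Continuous (flowCost ℓ · ) := by
    show Continuous fun f : V → V → ℝ => ∑ u, ∑ v, f u v * ℓ u v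
    exact continuous_finset_sum _ fun u _ => continuous_finset_sum _ fun v _ =>
      (e u v).mul continuous_const
  obtain ⟨f, hfK, hfmin⟩ := hKcomp.exists_isMinOn hKne hcont.continuousOn
  exact ⟨f, hfK, fun g hg => hfmin hg⟩


/-- Theorem `thm:anyst`: given supply `s`, demand `d` and a target supply `α`
with `α_i > 0 → d_i > 0`, there exist nonnegative surge prices `r̄` and a min cost flow `f`
from `s` to `α` along which every move with positive flow achieves the maximum taxicab
utility `μ(u → · | α, r̄, d)`; i.e., some passenger-taxicab equilibrium induces supply `α`. -/
theorem stmt6 {V : Type*} [Fintype V] [Nonempty V] [DecidableEq V]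
    (ℓ : V → V → ℝ)
    (hl0 : ∀ u, ℓ u u = 0) (hlsymm : ∀ u v, ℓ u v = ℓ v u)
    (hlnn : ∀ u v, 0 ≤ ℓ u v) (hltri : ∀ u v w, ℓ u w ≤ ℓ u v + ℓ v w)
    (s d α : V → ℝ)
    (hs0 : ∀ v, 0 ≤ s v) (hs1 : ∑ v, s v = 1)
    (hd0 : ∀ v, 0 ≤ d v) (hd1 : ∑ v, d v = 1)
    (hα0 : ∀ v, 0 ≤ α v) (hα1 : ∑ v, α v = 1)
    (hαd : ∀ i, 0 < α i → 0 < d i) :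
    ∃ r : V → ℝ, (∀ v, 0 ≤ r v) ∧
      ∃ f, IsMinCostFlow ℓ f s α ∧
        ∀ u v, 0 < f u v →
          IsGreatest (Set.range fun w => util ℓ α r d u w) (util ℓ α r d u v) := by
  classical
  obtain ⟨f, hf⟩ := exists_minflow ℓ s α hs0 hs1 hα0 hα1
  obtain ⟨a, b, ha0, hab, habe⟩ := exists_potential ℓ f s α hf
  set C : ℝ := Finset.univ.sup' Finset.univ_nonempty (fun v => |b v|) with hC
  have hCb : ∀ v, 0 ≤ b v + C := by
    intro v
    have : |b v| ≤ C := Finset.le_sup' (fun v => |b v|) (Finset.mem_univ v)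
    have := neg_abs_le (b v)
    linarith
  have hC0 : 0 ≤ C := by
    obtain ⟨p⟩ := (inferInstance : Nonempty V)
    have : |b p| ≤ C := Finset.le_sup' (fun v => |b v|) (Finset.mem_univ p)
    have := abs_nonneg (b p)
    linarith
  set r : V → ℝ := fun v => if 0 < α v then (b v + C) / min 1 (d v / α v) else 0 with hr
  have hmpos : ∀ v, 0 < α v → 0 < min 1 (d v / α v) := by
    intro v hv
    exact lt_min one_pos (div_pos (hαd v hv) hv)
  have hrnn : ∀ v, 0 ≤ r v := by
    intro v
    rw [hr]
    by_cases hv : 0 < α v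
    · simp only [if_pos hv]
      exact div_nonneg (hCb v) (le_of_lt (hmpos v hv))
    · simp only [if_neg hv]
      exact le_refl 0
  have hutil_pos : ∀ u v, 0 < α v → util ℓ α r d u v = b v + C - ℓ u v := by
    intro u v hv
    unfold util
    rw [hr]
    simp only [if_pos hv]
    rw [div_mul_cancel₀ _ (ne_of_gt (hmpos v hv))]
  have hutil_zero : ∀ u v, ¬ 0 < α v → util ℓ α r d u v = -ℓ u v := by
    intro u v hv
    unfold util
    have hv0 : α v = 0 := le_antisymm (not_lt.mp hv) (hα0 v)
    rw [hv0]
    simp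
  refine ⟨r, hrnn, f, hf, ?_⟩
  intro u v huv
  have hαv : 0 < α v := by
    have h1 : f u v ≤ ∑ p, f p v :=
      Finset.single_le_sum (fun p _ => hf.1.1 p v) (Finset.mem_univ u)
    have h2 := hf.1.2.2 v
    linarith
  have hval : util ℓ α r d u v = C - a u := by
    rw [hutil_pos u v hαv]
    have := habe u v huv
    linarith
  constructor
  · exact ⟨v, rfl⟩
  · rintro z ⟨p, rfl⟩
    rw [hval]
    show util ℓ α r d u p ≤ C - a u
    by_cases hp : 0 < α p
    · rw [hutil_pos u p hp]
      have := hab u p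
      linarith
    · rw [hutil_zero u p hp]
      have h1 := hlnn u p
      have h2 := ha0 u
      linarith
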